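/- Let s ≥ 1, n ≥ 1, let θ ∈ 𝕋^s have pairwise distinct entries, and let g ∈ ℂ^s. Then for every z ∈ 𝕋 with v(z) ≠ 0, |u(z)/v(z)|² = (L(z) + z^n·L̃(z) + z^{−n}·conj(L̃(z))) / L̂(z), where L = û·û* + ũ·ũ*, L̃ = û·ũ*, and L̂ = v·v*. In particular, the squared-magnitude measurement |u(z)/v(z)|² is, on 𝕋, a ratio of Laurent polynomials of degree at most s in z and 1/z. -/

import Mathlib

open Polynomial Finset Complex

/-- `t_l(z) = ∏_{i ≠ l} (z·θ_i − 1)`. -/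
noncomputable def tPoly (s : ℕ) (θ : Fin s → ℂ) (l : Fin s) : Polynomial ℂ :=
  ∏ i ∈ Finset.univ.erase l, (Polynomial.C (θ i) * Polynomial.X - 1)

/-- `û(z) = Σ_l g_l · θ_l^n · t_l(z)`. -/
noncomputable def uHat (s n : ℕ) (θ g : Fin s → ℂ) : Polynomial ℂ :=
  ∑ l : Fin s, Polynomial.C (g l * θ l ^ n) * tPoly s θ l

/-- `ũ(z) = −Σ_l g_l · t_l(z)`. -/
noncomputable def uTilde (s : ℕ) (θ g : Fin s → ℂ) : Polynomial ℂ :=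
  -∑ l : Fin s, Polynomial.C (g l) * tPoly s θ l

/-- `v(z) = ∏_l (z·θ_l − 1)`. -/
noncomputable def vPoly (s : ℕ) (θ : Fin s → ℂ) : Polynomial ℂ :=
  ∏ l : Fin s, (Polynomial.C (θ l) * Polynomial.X - 1)

/-- `u(z) = z^n·û(z) + ũ(z)`. -/
noncomputable def uPoly (s n : ℕ) (θ g : Fin s → ℂ) : Polynomial ℂ :=
  Polynomial.X ^ n * uHat s n θ g + uTilde s θ g

/-- on the unit circle `𝕋`, wherever `v(z) ≠ 0`,
`|u(z)/v(z)|² = (L(z) + z^n L̃(z) + z^{−n} conj(L̃(z))) / L̂(z)`, where on `𝕋`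
`L(z) = û(z)·conj(û(z)) + ũ(z)·conj(ũ(z))`, `L̃(z) = û(z)·conj(ũ(z))` and
`L̂(z) = v(z)·conj(v(z))`. -/
theorem squared_measurement_laurent (s n : ℕ) (hs : 1 ≤ s) (hn : 1 ≤ n)
    (θ : Fin s → ℂ) (hθT : ∀ l, ‖θ l‖ = 1) (hθinj : Function.Injective θ)
    (g : Fin s → ℂ) :
    ∀ z : ℂ, ‖z‖ = 1 → (vPoly s θ).eval z ≠ 0 →
      ((Complex.normSq ((uPoly s n θ g).eval z / (vPoly s θ).eval z) : ℝ) : ℂ) =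
        (((uHat s n θ g).eval z * (starRingEnd ℂ) ((uHat s n θ g).eval z)
            + (uTilde s θ g).eval z * (starRingEnd ℂ) ((uTilde s θ g).eval z))
          + z ^ (n : ℤ) * ((uHat s n θ g).eval z * (starRingEnd ℂ) ((uTilde s θ g).eval z))
          + z ^ (-(n : ℤ)) *
              (starRingEnd ℂ) ((uHat s n θ g).eval z * (starRingEnd ℂ) ((uTilde s θ g).eval z)))
        / ((vPoly s θ).eval z * (starRingEnd ℂ) ((vPoly s θ).eval z)) := by
  intro z hz1 hv
  have hz : z ≠ 0 := by
    intro h; rw [h] at hz1; simp at hz1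
  have hc : (starRingEnd ℂ) z = z⁻¹ := (Complex.inv_eq_conj hz1).symm
  set a := (uHat s n θ g).eval z with ha
  set b := (uTilde s θ g).eval z with hb
  set w := (vPoly s θ).eval z with hw
  have hwc : (starRingEnd ℂ) w ≠ 0 := by simpa using hv
  have hu : (uPoly s n θ g).eval z = z ^ n * a + b := by
    simp [uPoly, ha, hb]
  rw [← Complex.mul_conj, hu, map_div₀, map_add, map_mul, map_pow, hc]
  rw [zpow_neg, zpow_natCast, map_mul, Complex.conj_conj]
  field_simp
  have h1 : z ^ n * z⁻¹ ^ n = 1 := by rw [← mul_pow, mul_inv_cancel₀ hz, one_pow]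
  linear_combination (b * (starRingEnd ℂ) a + z ^ n * a * (starRingEnd ℂ) a) * h1
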